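/- If φ : ℝ^n → ℝ is a nonnegative C² function with ∫_{ℝ^n} φ ≤ 1 and ∫_{ℝ^n} φ|∇φ|² < ∞, then (∫_{ℝ^n} |∇φ|²)² ≤ ∫_{ℝ^n} φ|Δφ|². -/

import Mathlib

open MeasureTheory Filter Metric Topology

noncomputable def laplacian {n : ℕ} (φ : EuclideanSpace ℝ (Fin n) → ℝ)
    (x : EuclideanSpace ℝ (Fin n)) : ℝ :=
  ∑ i : Fin n, fderiv ℝ (fun y => fderiv ℝ φ y (EuclideanSpace.single i 1)) x
    (EuclideanSpace.single i 1)

section Aux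

variable {n : ℕ}

/-- Integral of a directional derivative of a compactly supported C¹ function vanishes. -/
lemma integral_fderiv_apply_eq_zero {g : EuclideanSpace ℝ (Fin n) → ℝ}
    (hg : ContDiff ℝ 1 g) (h'g : HasCompactSupport g) (v : EuclideanSpace ℝ (Fin n)) :
    ∫ x, fderiv ℝ g x v = 0 := by
  obtain ⟨C, hC⟩ := ContDiff.lipschitzWith_of_hasCompactSupport h'g hg one_ne_zero
  have h := LipschitzWith.integral_lineDeriv_mul_eq (μ := volume) (C := 0)
    (f := fun _ => (1:ℝ)) (LipschitzWith.const' (K := 0) (1:ℝ)) hC h'g (-v)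
  have hl : ∀ x : EuclideanSpace ℝ (Fin n), lineDeriv ℝ (fun _ => (1:ℝ)) x (-v) = 0 := by
    intro x; simp [lineDeriv]
  have h2 : ∀ x, lineDeriv ℝ g x (-(-v)) = fderiv ℝ g x v := fun x => by
    rw [neg_neg]; exact (hg.differentiable one_ne_zero x).lineDeriv_eq_fderiv
  simp only [hl, h2, zero_mul, integral_zero, mul_one] at h
  exact h.symm

lemma grad_norm_sq (φ : EuclideanSpace ℝ (Fin n) → ℝ) (x : EuclideanSpace ℝ (Fin n)) :
    ‖gradient φ x‖ ^ 2 = ∑ i : Fin n, (fderiv ℝ φ x (EuclideanSpace.single i 1)) ^ 2 := by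
  have h : ∀ i : Fin n, gradient φ x i = fderiv ℝ φ x (EuclideanSpace.single i 1) := by
    intro i
    have := InnerProductSpace.toDual_symm_apply (𝕜 := ℝ)
      (x := EuclideanSpace.single i 1) (y := fderiv ℝ φ x)
    rw [gradient, ← this, EuclideanSpace.inner_single_right]
    simp
  rw [EuclideanSpace.norm_eq, Real.sq_sqrt (by positivity)]
  exact Finset.sum_congr rfl fun i _ => by rw [Real.norm_eq_abs, sq_abs, h i]

lemma fderiv_mul3 {φ χ : EuclideanSpace ℝ (Fin n) → ℝ}
    (hφ : ContDiff ℝ 2 φ) (hχ : ContDiff ℝ 1 χ) (i : Fin n) (x : EuclideanSpace ℝ (Fin n)) :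
    fderiv ℝ (fun y => φ y * fderiv ℝ φ y (EuclideanSpace.single i 1) * χ y) x
        (EuclideanSpace.single i 1)
      = fderiv ℝ φ x (EuclideanSpace.single i 1) * fderiv ℝ φ x (EuclideanSpace.single i 1) * χ x
        + φ x * fderiv ℝ (fun y => fderiv ℝ φ y (EuclideanSpace.single i 1)) x
            (EuclideanSpace.single i 1) * χ x
        + φ x * fderiv ℝ φ x (EuclideanSpace.single i 1)
            * fderiv ℝ χ x (EuclideanSpace.single i 1) := by
  have hD : ContDiff ℝ 1 (fun y => fderiv ℝ φ y (EuclideanSpace.single i 1)) :=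
    (hφ.fderiv_right (by norm_num)).clm_apply contDiff_const
  have h1 : DifferentiableAt ℝ φ x := (hφ.differentiable (by norm_num)) x
  have h2 : DifferentiableAt ℝ (fun y => fderiv ℝ φ y (EuclideanSpace.single i 1)) x :=
    (hD.differentiable one_ne_zero) x
  have h3 : DifferentiableAt ℝ χ x := (hχ.differentiable one_ne_zero) x
  rw [fderiv_fun_mul (h1.fun_mul h2) h3, fderiv_fun_mul h1 h2]
  simp only [ContinuousLinearMap.add_apply, ContinuousLinearMap.smul_apply, smul_eq_mul]
  ring

section cutoff
variable (θ : ContDiffBump (0 : EuclideanSpace ℝ (Fin n)))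

noncomputable def cut (k : ℕ) (x : EuclideanSpace ℝ (Fin n)) : ℝ := θ (((k:ℝ)+1)⁻¹ • x)

lemma cut_contDiff (k : ℕ) : ContDiff ℝ 1 (cut θ k) :=
  θ.contDiff.comp (contDiff_const_smul _)

lemma cut_compactSupport (k : ℕ) : HasCompactSupport (cut θ k) := by
  apply HasCompactSupport.intro (isCompact_closedBall (0 : EuclideanSpace ℝ (Fin n))
    (θ.rOut * ((k:ℝ)+1)))
  intro x hx
  apply θ.zero_of_le_dist
  simp only [mem_closedBall, dist_zero_right, not_le] at hx
  simp only [dist_zero_right]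
  rw [norm_smul, norm_inv, Real.norm_eq_abs, abs_of_pos (by positivity), inv_mul_eq_div,
    le_div_iff₀ (by positivity)]
  linarith

lemma cut_nonneg (k : ℕ) (x : EuclideanSpace ℝ (Fin n)) : 0 ≤ cut θ k x := θ.nonneg

lemma cut_le_one (k : ℕ) (x : EuclideanSpace ℝ (Fin n)) : cut θ k x ≤ 1 := θ.le_one

lemma cut_eventually_one (x : EuclideanSpace ℝ (Fin n)) :
    ∀ᶠ k : ℕ in atTop, cut θ k x = 1 := by
  filter_upwards [eventually_ge_atTop ⌈‖x‖ / θ.rIn⌉₊] with k hk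
  apply θ.one_of_mem_closedBall
  simp only [mem_closedBall, dist_zero_right]
  rw [norm_smul, norm_inv, Real.norm_eq_abs, abs_of_pos (by positivity), inv_mul_eq_div,
    div_le_iff₀ (by positivity)]
  have h1 : ‖x‖ ≤ (⌈‖x‖ / θ.rIn⌉₊ : ℝ) * θ.rIn := by
    rw [← div_le_iff₀ θ.rIn_pos]; exact Nat.le_ceil _
  have h2 : (⌈‖x‖ / θ.rIn⌉₊ : ℝ) ≤ (k:ℝ) + 1 := by
    have : (⌈‖x‖ / θ.rIn⌉₊ : ℝ) ≤ (k:ℝ) := Nat.cast_le.2 hk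
    linarith
  calc ‖x‖ ≤ (⌈‖x‖ / θ.rIn⌉₊ : ℝ) * θ.rIn := h1
    _ ≤ ((k:ℝ)+1) * θ.rIn := by gcongr; exact θ.rIn_pos.le
    _ = θ.rIn * ((k:ℝ)+1) := mul_comm _ _

lemma cut_fderiv_bound :
    ∃ C : ℝ, 0 ≤ C ∧ ∀ k : ℕ, ∀ x, ∀ v, |fderiv ℝ (cut θ k) x v| ≤ ((k:ℝ)+1)⁻¹ * C * ‖v‖ := by
  obtain ⟨C, hC⟩ := ContDiff.lipschitzWith_of_hasCompactSupport θ.hasCompactSupport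
    (θ.contDiff (n := 1)) (by simp)
  refine ⟨C, C.coe_nonneg, fun k x v => ?_⟩
  have hlip : LipschitzWith (C * ‖(((k:ℝ)+1)⁻¹)‖₊) (cut θ k) :=
    hC.comp (lipschitzWith_smul (((k:ℝ)+1)⁻¹))
  have hb := norm_fderiv_le_of_lipschitz ℝ hlip (x₀ := x)
  calc |fderiv ℝ (cut θ k) x v| ≤ ‖fderiv ℝ (cut θ k) x‖ * ‖v‖ :=
        (fderiv ℝ (cut θ k) x).le_opNorm v
    _ ≤ (C * ‖(((k:ℝ)+1)⁻¹)‖₊ : NNReal) * ‖v‖ := by gcongr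
    _ = ((k:ℝ)+1)⁻¹ * C * ‖v‖ := by
        push_cast
        rw [Real.norm_eq_abs, abs_of_pos (by positivity)]
        ring
end cutoff

/-- Integration by parts identity with a compactly supported cutoff. -/
lemma ibp_identity {φ χ : EuclideanSpace ℝ (Fin n) → ℝ}
    (hφ : ContDiff ℝ 2 φ) (hχ : ContDiff ℝ 1 χ) (hχc : HasCompactSupport χ) :
    ∫ x, (∑ i : Fin n, (fderiv ℝ φ x (EuclideanSpace.single i 1)) ^ 2) * χ x
      = -(∫ x, φ x * laplacian φ x * χ x)
        - ∫ x, φ x * (∑ i : Fin n, fderiv ℝ φ x (EuclideanSpace.single i 1)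
            * fderiv ℝ χ x (EuclideanSpace.single i 1)) := by
  classical
  set e : Fin n → EuclideanSpace ℝ (Fin n) := fun i => EuclideanSpace.single i 1 with he
  have hφ1 : ContDiff ℝ 1 φ := hφ.of_le one_le_two
  have hψ : ∀ i, ContDiff ℝ 1 (fun y => fderiv ℝ φ y (e i)) := fun i =>
    (hφ.fderiv_right (by norm_num)).clm_apply contDiff_const
  have hψ2 : ∀ i, Continuous (fun y => fderiv ℝ (fun z => fderiv ℝ φ z (e i)) y (e i)) :=
    fun i => (((hψ i).continuous_fderiv one_ne_zero).clm_apply continuous_const)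
  have hχcont : Continuous χ := hχ.continuous
  have hdχ : ∀ i, Continuous (fun y => fderiv ℝ χ y (e i)) :=
    fun i => ((hχ.continuous_fderiv one_ne_zero).clm_apply continuous_const)
  have hdχc : ∀ i, HasCompactSupport (fun y => fderiv ℝ χ y (e i)) := by
    intro i
    exact (hχc.fderiv ℝ).comp_left (g := fun L : EuclideanSpace ℝ (Fin n) →L[ℝ] ℝ => L (e i)) rfl
  -- integrability of each of the three terms, for each i
  have hint1 : ∀ i, Integrable (fun x => fderiv ℝ φ x (e i) * fderiv ℝ φ x (e i) * χ x) :=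
    fun i => (( (hψ i).continuous.mul (hψ i).continuous).mul hχcont).integrable_of_hasCompactSupport
      hχc.mul_left
  have hint2 : ∀ i, Integrable (fun x =>
      φ x * fderiv ℝ (fun z => fderiv ℝ φ z (e i)) x (e i) * χ x) :=
    fun i => ((hφ.continuous.mul (hψ2 i)).mul hχcont).integrable_of_hasCompactSupport hχc.mul_left
  have hint3 : ∀ i, Integrable (fun x => φ x * fderiv ℝ φ x (e i) * fderiv ℝ χ x (e i)) :=
    fun i => ((hφ.continuous.mul (hψ i).continuous).mul (hdχ i)).integrable_of_hasCompactSupport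
      ((hdχc i).mul_left)
  have key : ∀ i : Fin n,
      (∫ x, fderiv ℝ φ x (e i) * fderiv ℝ φ x (e i) * χ x)
      + (∫ x, φ x * fderiv ℝ (fun z => fderiv ℝ φ z (e i)) x (e i) * χ x)
      + (∫ x, φ x * fderiv ℝ φ x (e i) * fderiv ℝ χ x (e i)) = 0 := by
    intro i
    have hg : ContDiff ℝ 1 (fun y => φ y * fderiv ℝ φ y (e i) * χ y) :=
      (hφ1.mul (hψ i)).mul hχ
    have hgc : HasCompactSupport (fun y => φ y * fderiv ℝ φ y (e i) * χ y) := hχc.mul_left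
    have h0 := integral_fderiv_apply_eq_zero hg hgc (e i)
    have heq : ∀ x, fderiv ℝ (fun y => φ y * fderiv ℝ φ y (e i) * χ y) x (e i)
        = fderiv ℝ φ x (e i) * fderiv ℝ φ x (e i) * χ x
          + φ x * fderiv ℝ (fun z => fderiv ℝ φ z (e i)) x (e i) * χ x
          + φ x * fderiv ℝ φ x (e i) * fderiv ℝ χ x (e i) := fun x => fderiv_mul3 hφ hχ i x
    rw [integral_congr_ae (Eventually.of_forall heq)] at h0
    have h12 : Integrable (fun x => fderiv ℝ φ x (e i) * fderiv ℝ φ x (e i) * χ x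
        + φ x * fderiv ℝ (fun z => fderiv ℝ φ z (e i)) x (e i) * χ x) volume :=
      (hint1 i).add (hint2 i)
    rw [integral_add h12 (hint3 i), integral_add (hint1 i) (hint2 i)] at h0
    exact h0
  have hA : ∫ x, (∑ i : Fin n, (fderiv ℝ φ x (e i)) ^ 2) * χ x
      = ∑ i : Fin n, ∫ x, fderiv ℝ φ x (e i) * fderiv ℝ φ x (e i) * χ x := by
    rw [← integral_finset_sum _ (fun i _ => hint1 i)]
    apply integral_congr_ae
    filter_upwards with x
    rw [Finset.sum_mul]
    exact Finset.sum_congr rfl fun i _ => by ring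
  have hB : ∫ x, φ x * laplacian φ x * χ x
      = ∑ i : Fin n, ∫ x, φ x * fderiv ℝ (fun z => fderiv ℝ φ z (e i)) x (e i) * χ x := by
    rw [← integral_finset_sum _ (fun i _ => hint2 i)]
    apply integral_congr_ae
    filter_upwards with x
    rw [laplacian, Finset.mul_sum, Finset.sum_mul]
  have hC : ∫ x, φ x * (∑ i : Fin n, fderiv ℝ φ x (e i) * fderiv ℝ χ x (e i))
      = ∑ i : Fin n, ∫ x, φ x * fderiv ℝ φ x (e i) * fderiv ℝ χ x (e i) := by
    rw [← integral_finset_sum _ (fun i _ => hint3 i)]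
    apply integral_congr_ae
    filter_upwards with x
    rw [Finset.mul_sum]
    exact Finset.sum_congr rfl fun i _ => by ring
  have hsum : (∑ i : Fin n, ∫ x, fderiv ℝ φ x (e i) * fderiv ℝ φ x (e i) * χ x)
      + (∑ i : Fin n, ∫ x, φ x * fderiv ℝ (fun z => fderiv ℝ φ z (e i)) x (e i) * χ x)
      + (∑ i : Fin n, ∫ x, φ x * fderiv ℝ φ x (e i) * fderiv ℝ χ x (e i)) = 0 := by
    rw [← Finset.sum_add_distrib, ← Finset.sum_add_distrib]
    simp only [key, Finset.sum_const_zero]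
  rw [hA, hB, hC]
  linarith

end Aux

theorem stmt_0 (n : ℕ) (hn : 1 ≤ n) (φ : EuclideanSpace ℝ (Fin n) → ℝ)
    (hφreg : ContDiff ℝ 2 φ) (hφnonneg : ∀ x, 0 ≤ φ x)
    (hmass : ∫⁻ x, ENNReal.ofReal (φ x) ≤ 1)
    (hfin : ∫⁻ x, ENNReal.ofReal (φ x * ‖gradient φ x‖ ^ 2) < ⊤) :
    (∫⁻ x, ENNReal.ofReal (‖gradient φ x‖ ^ 2)) ^ 2
      ≤ ∫⁻ x, ENNReal.ofReal (φ x * (laplacian φ x) ^ 2) := by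
  classical
  by_cases hR : (∫⁻ x, ENNReal.ofReal (φ x * (laplacian φ x) ^ 2)) = ⊤
  · rw [hR]; exact le_top
  -- continuity facts
  have hφcont : Continuous φ := hφreg.continuous
  have hψ : ∀ i : Fin n, ContDiff ℝ 1 (fun y => fderiv ℝ φ y (EuclideanSpace.single i 1)) :=
    fun i => (hφreg.fderiv_right (by norm_num)).clm_apply contDiff_const
  have hlapcont : Continuous (laplacian φ) := by
    apply continuous_finset_sum
    intro i _
    exact ((hψ i).continuous_fderiv one_ne_zero).clm_apply continuous_const
  have hgradcont2 : Continuous (fun x => ‖gradient φ x‖ ^ 2) := by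
    have h1 : Continuous (gradient φ) :=
      (InnerProductSpace.toDual ℝ (EuclideanSpace ℝ (Fin n))).symm.continuous.comp
        (hφreg.continuous_fderiv (by norm_num))
    exact (h1.norm.pow 2)
  -- Step 1: Cauchy-Schwarz
  set I := ∫⁻ x, ENNReal.ofReal (φ x * |laplacian φ x|) with hIdef
  have hI2 : I * I ≤ ∫⁻ x, ENNReal.ofReal (φ x * (laplacian φ x) ^ 2) := by
    have hconj : Real.HolderConjugate 2 2 := Real.HolderConjugate.two_two
    have hfc : Continuous (fun x => ENNReal.ofReal (Real.sqrt (φ x))) :=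
      ENNReal.continuous_ofReal.comp (Real.continuous_sqrt.comp hφcont)
    have hgc : Continuous (fun x => ENNReal.ofReal (Real.sqrt (φ x) * |laplacian φ x|)) :=
      ENNReal.continuous_ofReal.comp ((Real.continuous_sqrt.comp hφcont).mul hlapcont.abs)
    have key := ENNReal.lintegral_mul_le_Lp_mul_Lq volume hconj
      hfc.aemeasurable hgc.aemeasurable
    simp only [Pi.mul_apply] at key
    have e1 : ∫⁻ x, ENNReal.ofReal (Real.sqrt (φ x))
        * ENNReal.ofReal (Real.sqrt (φ x) * |laplacian φ x|) = I := by
      apply lintegral_congr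
      intro x
      rw [← ENNReal.ofReal_mul (Real.sqrt_nonneg _), ← mul_assoc,
        Real.mul_self_sqrt (hφnonneg x)]
    have e2 : ∫⁻ x, ENNReal.ofReal (Real.sqrt (φ x)) ^ (2:ℝ)
        = ∫⁻ x, ENNReal.ofReal (φ x) := by
      apply lintegral_congr
      intro x
      rw [ENNReal.ofReal_rpow_of_nonneg (Real.sqrt_nonneg _) (by norm_num)]
      congr 1
      rw [show ((2:ℝ)) = ((2:ℕ):ℝ) by norm_num, Real.rpow_natCast,
        Real.sq_sqrt (hφnonneg x)]
    have e3 : ∫⁻ x, ENNReal.ofReal (Real.sqrt (φ x) * |laplacian φ x|) ^ (2:ℝ)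
        = ∫⁻ x, ENNReal.ofReal (φ x * (laplacian φ x) ^ 2) := by
      apply lintegral_congr
      intro x
      rw [ENNReal.ofReal_rpow_of_nonneg (by positivity) (by norm_num)]
      congr 1
      rw [show ((2:ℝ)) = ((2:ℕ):ℝ) by norm_num, Real.rpow_natCast]
      rw [mul_pow, Real.sq_sqrt (hφnonneg x), sq_abs]
    rw [e1, e2, e3] at key
    calc I * I ≤ ((∫⁻ x, ENNReal.ofReal (φ x)) ^ ((1:ℝ)/2)
          * (∫⁻ x, ENNReal.ofReal (φ x * (laplacian φ x) ^ 2)) ^ ((1:ℝ)/2))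
        * ((∫⁻ x, ENNReal.ofReal (φ x)) ^ ((1:ℝ)/2)
          * (∫⁻ x, ENNReal.ofReal (φ x * (laplacian φ x) ^ 2)) ^ ((1:ℝ)/2)) :=
        mul_le_mul' key key
      _ = ((∫⁻ x, ENNReal.ofReal (φ x)) ^ ((1:ℝ)/2) * (∫⁻ x, ENNReal.ofReal (φ x)) ^ ((1:ℝ)/2))
          * ((∫⁻ x, ENNReal.ofReal (φ x * (laplacian φ x) ^ 2)) ^ ((1:ℝ)/2)
            * (∫⁻ x, ENNReal.ofReal (φ x * (laplacian φ x) ^ 2)) ^ ((1:ℝ)/2)) := by ring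
      _ = (∫⁻ x, ENNReal.ofReal (φ x)) * (∫⁻ x, ENNReal.ofReal (φ x * (laplacian φ x) ^ 2)) := by
          rw [← ENNReal.rpow_add_of_nonneg _ _ (by norm_num) (by norm_num),
            ← ENNReal.rpow_add_of_nonneg _ _ (by norm_num) (by norm_num)]
          norm_num
      _ ≤ 1 * (∫⁻ x, ENNReal.ofReal (φ x * (laplacian φ x) ^ 2)) := by gcongr
      _ = ∫⁻ x, ENNReal.ofReal (φ x * (laplacian φ x) ^ 2) := one_mul _
  have hInet : I ≠ ⊤ := by
    intro h
    rw [h, ENNReal.top_mul_top] at hI2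
    exact hR (top_le_iff.mp hI2)
  -- integrability facts
  have hJint : Integrable (fun x => φ x * |laplacian φ x|) := by
    refine ⟨(hφcont.mul hlapcont.abs).aestronglyMeasurable, ?_⟩
    rw [hasFiniteIntegral_iff_ofReal
      (Eventually.of_forall fun x => mul_nonneg (hφnonneg x) (abs_nonneg _))]
    exact lt_top_iff_ne_top.mpr hInet
  have hφint : Integrable φ := by
    refine ⟨hφcont.aestronglyMeasurable, ?_⟩
    rw [hasFiniteIntegral_iff_ofReal (Eventually.of_forall fun x => hφnonneg x)]
    exact lt_of_le_of_lt hmass ENNReal.one_lt_top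
  have hgint : Integrable (fun x => φ x * ‖gradient φ x‖ ^ 2) := by
    refine ⟨(hφcont.mul hgradcont2).aestronglyMeasurable, ?_⟩
    rw [hasFiniteIntegral_iff_ofReal
      (Eventually.of_forall fun x => mul_nonneg (hφnonneg x) (sq_nonneg _))]
    exact hfin
  set J := ∫ x, φ x * |laplacian φ x| with hJdef
  have hJeq : ENNReal.ofReal J = I :=
    ofReal_integral_eq_lintegral_ofReal hJint
      (Eventually.of_forall fun x => mul_nonneg (hφnonneg x) (abs_nonneg _))
  -- the cutoff
  set θ : ContDiffBump (0 : EuclideanSpace ℝ (Fin n)) := ⟨1, 2, one_pos, one_lt_two⟩ with hθ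
  obtain ⟨C, hC0, hCb⟩ := cut_fderiv_bound θ
  set B := (n:ℝ) * C / 2 * ∫ x, (φ x + φ x * ‖gradient φ x‖ ^ 2) with hBdef
  have hB0 : 0 ≤ B := by
    apply mul_nonneg (by positivity)
    apply integral_nonneg
    intro x
    have := hφnonneg x
    positivity
  -- Step 2 : per-k estimate
  have est : ∀ k : ℕ, ∫ x, (∑ i : Fin n, (fderiv ℝ φ x (EuclideanSpace.single i 1)) ^ 2)
      * cut θ k x ≤ J + ((k:ℝ)+1)⁻¹ * B := by
    intro k
    have hχ : ContDiff ℝ 1 (cut θ k) := cut_contDiff θ k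
    have hχc : HasCompactSupport (cut θ k) := cut_compactSupport θ k
    rw [ibp_identity hφreg hχ hχc]
    have hdχ : ∀ i : Fin n, Continuous (fun y => fderiv ℝ (cut θ k) y (EuclideanSpace.single i 1)) :=
      fun i => ((hχ.continuous_fderiv one_ne_zero).clm_apply continuous_const)
    have hdχc : ∀ i : Fin n,
        HasCompactSupport (fun y => fderiv ℝ (cut θ k) y (EuclideanSpace.single i 1)) := fun i =>
      (hχc.fderiv ℝ).comp_left
        (g := fun L : EuclideanSpace ℝ (Fin n) →L[ℝ] ℝ => L (EuclideanSpace.single i 1)) rfl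
    have hSc : Continuous (fun x => ∑ i : Fin n, fderiv ℝ φ x (EuclideanSpace.single i 1)
        * fderiv ℝ (cut θ k) x (EuclideanSpace.single i 1)) := by
      apply continuous_finset_sum
      intro i _
      exact (hψ i).continuous.mul (hdχ i)
    have hint1 : Integrable (fun x => φ x * laplacian φ x * cut θ k x) :=
      ((hφcont.mul hlapcont).mul hχ.continuous).integrable_of_hasCompactSupport hχc.mul_left
    have hint2 : Integrable (fun x => φ x
        * (∑ i : Fin n, fderiv ℝ φ x (EuclideanSpace.single i 1)
          * fderiv ℝ (cut θ k) x (EuclideanSpace.single i 1))) := by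
      apply (hφcont.mul hSc).integrable_of_hasCompactSupport
      apply HasCompactSupport.intro hχc
      intro x hx
      have hd0 : fderiv ℝ (cut θ k) x = 0 := by
        have := support_fderiv_subset ℝ (f := cut θ k)
        by_contra h
        exact hx (this h)
      simp [hd0]
    have hb1 : -(∫ x, φ x * laplacian φ x * cut θ k x) ≤ J := by
      rw [← integral_neg]
      apply integral_mono hint1.neg hJint
      intro x
      have h1 : |φ x * laplacian φ x * cut θ k x| ≤ φ x * |laplacian φ x| := by
        rw [abs_mul, abs_mul, abs_of_nonneg (hφnonneg x), abs_of_nonneg (cut_nonneg θ k x)]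
        apply mul_le_of_le_one_right (mul_nonneg (hφnonneg x) (abs_nonneg _))
        exact cut_le_one θ k x
      calc -(φ x * laplacian φ x * cut θ k x) ≤ |φ x * laplacian φ x * cut θ k x| := neg_le_abs _
        _ ≤ φ x * |laplacian φ x| := h1
    have hb2 : -(∫ x, φ x * (∑ i : Fin n, fderiv ℝ φ x (EuclideanSpace.single i 1)
        * fderiv ℝ (cut θ k) x (EuclideanSpace.single i 1))) ≤ ((k:ℝ)+1)⁻¹ * B := by
      rw [← integral_neg]
      have hbint : Integrable (fun x => ((k:ℝ)+1)⁻¹ * ((n:ℝ) * C / 2)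
          * (φ x + φ x * ‖gradient φ x‖ ^ 2)) := (hφint.add hgint).const_mul _
      have step : ∫ x, -(φ x * (∑ i : Fin n, fderiv ℝ φ x (EuclideanSpace.single i 1)
          * fderiv ℝ (cut θ k) x (EuclideanSpace.single i 1)))
          ≤ ∫ x, ((k:ℝ)+1)⁻¹ * ((n:ℝ) * C / 2) * (φ x + φ x * ‖gradient φ x‖ ^ 2) := by
        apply integral_mono hint2.neg hbint
        intro x
        have hψb : ∀ i : Fin n, |fderiv ℝ φ x (EuclideanSpace.single i 1)| ≤ ‖gradient φ x‖ := by
          intro i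
          have h2 : (fderiv ℝ φ x (EuclideanSpace.single i 1)) ^ 2 ≤ ‖gradient φ x‖ ^ 2 := by
            rw [grad_norm_sq]
            exact Finset.single_le_sum (f := fun i => (fderiv ℝ φ x (EuclideanSpace.single i 1))^2)
              (fun i _ => sq_nonneg _) (Finset.mem_univ i)
          calc |fderiv ℝ φ x (EuclideanSpace.single i 1)|
              = Real.sqrt ((fderiv ℝ φ x (EuclideanSpace.single i 1)) ^ 2) :=
              (Real.sqrt_sq_eq_abs _).symm
            _ ≤ Real.sqrt (‖gradient φ x‖ ^ 2) := Real.sqrt_le_sqrt h2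
            _ = ‖gradient φ x‖ := Real.sqrt_sq (norm_nonneg _)
        have hsum : |∑ i : Fin n, fderiv ℝ φ x (EuclideanSpace.single i 1)
            * fderiv ℝ (cut θ k) x (EuclideanSpace.single i 1)|
            ≤ (n:ℝ) * (‖gradient φ x‖ * (((k:ℝ)+1)⁻¹ * C)) := by
          calc |∑ i : Fin n, fderiv ℝ φ x (EuclideanSpace.single i 1)
              * fderiv ℝ (cut θ k) x (EuclideanSpace.single i 1)|
              ≤ ∑ i : Fin n, |fderiv ℝ φ x (EuclideanSpace.single i 1)
                * fderiv ℝ (cut θ k) x (EuclideanSpace.single i 1)| := Finset.abs_sum_le_sum_abs _ _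
            _ ≤ ∑ _i : Fin n, ‖gradient φ x‖ * (((k:ℝ)+1)⁻¹ * C) := by
                apply Finset.sum_le_sum
                intro i _
                rw [abs_mul]
                apply mul_le_mul (hψb i) ?_ (abs_nonneg _) (norm_nonneg _)
                have := hCb k x (EuclideanSpace.single i 1)
                rwa [EuclideanSpace.norm_single, norm_one, mul_one] at this
            _ = (n:ℝ) * (‖gradient φ x‖ * (((k:ℝ)+1)⁻¹ * C)) := by
                rw [Finset.sum_const, Finset.card_univ, Fintype.card_fin, nsmul_eq_mul]
        have hgb : φ x * ‖gradient φ x‖ ≤ (φ x + φ x * ‖gradient φ x‖ ^ 2) / 2 := by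
          nlinarith [hφnonneg x, sq_nonneg (‖gradient φ x‖ - 1), norm_nonneg (gradient φ x)]
        calc -(φ x * (∑ i : Fin n, fderiv ℝ φ x (EuclideanSpace.single i 1)
            * fderiv ℝ (cut θ k) x (EuclideanSpace.single i 1)))
            ≤ |φ x * (∑ i : Fin n, fderiv ℝ φ x (EuclideanSpace.single i 1)
              * fderiv ℝ (cut θ k) x (EuclideanSpace.single i 1))| := neg_le_abs _
          _ = φ x * |∑ i : Fin n, fderiv ℝ φ x (EuclideanSpace.single i 1)
              * fderiv ℝ (cut θ k) x (EuclideanSpace.single i 1)| := by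
              rw [abs_mul, abs_of_nonneg (hφnonneg x)]
          _ ≤ φ x * ((n:ℝ) * (‖gradient φ x‖ * (((k:ℝ)+1)⁻¹ * C))) := by
              apply mul_le_mul_of_nonneg_left hsum (hφnonneg x)
          _ = ((k:ℝ)+1)⁻¹ * ((n:ℝ) * C) * (φ x * ‖gradient φ x‖) := by ring
          _ ≤ ((k:ℝ)+1)⁻¹ * ((n:ℝ) * C) * ((φ x + φ x * ‖gradient φ x‖ ^ 2) / 2) := by
              apply mul_le_mul_of_nonneg_left hgb (by positivity)
          _ = ((k:ℝ)+1)⁻¹ * ((n:ℝ) * C / 2) * (φ x + φ x * ‖gradient φ x‖ ^ 2) := by ring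
      calc ∫ x, -(φ x * (∑ i : Fin n, fderiv ℝ φ x (EuclideanSpace.single i 1)
          * fderiv ℝ (cut θ k) x (EuclideanSpace.single i 1)))
          ≤ ∫ x, ((k:ℝ)+1)⁻¹ * ((n:ℝ) * C / 2) * (φ x + φ x * ‖gradient φ x‖ ^ 2) := step
        _ = ((k:ℝ)+1)⁻¹ * B := by
            rw [MeasureTheory.integral_const_mul, hBdef]
            ring
      -- end hb2
    linarith
  -- Step 3 : pass to the limit
  have hlim : (∫⁻ x, ENNReal.ofReal (‖gradient φ x‖ ^ 2)) ≤ I := by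
    have hcut : ∀ k : ℕ, (∫⁻ x, ENNReal.ofReal (‖gradient φ x‖ ^ 2 * cut θ k x))
        ≤ ENNReal.ofReal (J + ((k:ℝ)+1)⁻¹ * B) := by
      intro k
      have hik : Integrable (fun x => ‖gradient φ x‖ ^ 2 * cut θ k x) :=
        (hgradcont2.mul (cut_contDiff θ k).continuous).integrable_of_hasCompactSupport
          (cut_compactSupport θ k).mul_left
      rw [← ofReal_integral_eq_lintegral_ofReal hik
        (Eventually.of_forall fun x => mul_nonneg (sq_nonneg _) (cut_nonneg θ k x))]
      apply ENNReal.ofReal_le_ofReal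
      have heq : ∫ x, ‖gradient φ x‖ ^ 2 * cut θ k x
          = ∫ x, (∑ i : Fin n, (fderiv ℝ φ x (EuclideanSpace.single i 1)) ^ 2) * cut θ k x := by
        apply integral_congr_ae
        filter_upwards with x
        rw [grad_norm_sq]
      rw [heq]
      exact est k
    calc ∫⁻ x, ENNReal.ofReal (‖gradient φ x‖ ^ 2)
        = ∫⁻ x, liminf (fun k : ℕ => ENNReal.ofReal (‖gradient φ x‖ ^ 2 * cut θ k x)) atTop := by
          apply lintegral_congr
          intro x
          have ht : Tendsto (fun k : ℕ => ENNReal.ofReal (‖gradient φ x‖ ^ 2 * cut θ k x)) atTop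
              (𝓝 (ENNReal.ofReal (‖gradient φ x‖ ^ 2))) := by
            apply Tendsto.congr' ?_ tendsto_const_nhds
            filter_upwards [cut_eventually_one θ x] with k hk
            rw [hk, mul_one]
          exact ht.liminf_eq.symm
      _ ≤ liminf (fun k : ℕ => ∫⁻ x, ENNReal.ofReal (‖gradient φ x‖ ^ 2 * cut θ k x)) atTop := by
          apply lintegral_liminf_le
          intro k
          exact (ENNReal.continuous_ofReal.comp
            (hgradcont2.mul (cut_contDiff θ k).continuous)).measurable
      _ ≤ liminf (fun k : ℕ => ENNReal.ofReal (J + ((k:ℝ)+1)⁻¹ * B)) atTop :=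
          liminf_le_liminf (Eventually.of_forall hcut)
      _ = ENNReal.ofReal J := by
          have h0 : Tendsto (fun k : ℕ => ((k:ℝ)+1)⁻¹) atTop (𝓝 0) := by
            apply Tendsto.inv_tendsto_atTop
            exact tendsto_atTop_add_const_right atTop 1 tendsto_natCast_atTop_atTop
          have h1 : Tendsto (fun k : ℕ => J + ((k:ℝ)+1)⁻¹ * B) atTop (𝓝 (J + 0 * B)) :=
            tendsto_const_nhds.add (h0.mul_const B)
          rw [zero_mul, add_zero] at h1
          exact ((ENNReal.continuous_ofReal.tendsto J).comp h1).liminf_eq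
      _ = I := hJeq
  calc (∫⁻ x, ENNReal.ofReal (‖gradient φ x‖ ^ 2)) ^ 2
      = (∫⁻ x, ENNReal.ofReal (‖gradient φ x‖ ^ 2))
        * (∫⁻ x, ENNReal.ofReal (‖gradient φ x‖ ^ 2)) := sq _
    _ ≤ I * I := mul_le_mul' hlim hlim
    _ ≤ _ := hI2
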